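/- Let Ω ⊂ ℝ^d (d ≥ 2) be a convex body with boundary y = |x|^γ near the origin (γ ≥ 2) and positive curvature elsewhere. Then there are constants c > 0 and ρ₀ such that ∫_{SO(d)} |\widehat{χ}_Ω(ρ σ e)| dσ ≥ c ρ^{−(d+1)/2} for all ρ ≥ ρ₀. -/

import Mathlib

open MeasureTheory Real Filter

noncomputable section

abbrev SOd (d : ℕ) := Matrix.specialOrthogonalGroup (Fin d) ℝ

instance (d : ℕ) : MeasurableSpace (SOd d) := borel _

open RealInnerProductSpace in
/-- Fourier transform of the characteristic function of `Ω`. -/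
def ftChi {d : ℕ} (Ω : Set (EuclideanSpace ℝ (Fin d))) (ξ : EuclideanSpace ℝ (Fin d)) : ℂ :=
  ∫ x in Ω, Complex.exp (-(2 * Real.pi * Complex.I) * ((⟪ξ, x⟫ : ℝ) : ℂ))

/-- Number of integer lattice points in a set `A ⊆ ℝ^d`. -/
def latticeCount {d : ℕ} (A : Set (EuclideanSpace ℝ (Fin d))) : ℕ :=
  Nat.card {k : Fin d → ℤ // ((WithLp.equiv 2 (Fin d → ℝ)).symm fun i => (k i : ℝ)) ∈ A}

/-- Fundamental domain of the torus `T^d = ℝ^d/ℤ^d`. -/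
def cube (d : ℕ) : Set (EuclideanSpace ℝ (Fin d)) := {x | ∀ i, x i ∈ Set.Icc (0:ℝ) 1}

/-- Action of a special orthogonal matrix on `ℝ^d`. -/
def rotBy {d : ℕ} (σ : SOd d) (x : EuclideanSpace ℝ (Fin d)) : EuclideanSpace ℝ (Fin d) :=
  (WithLp.equiv 2 (Fin d → ℝ)).symm (σ.1.mulVec (WithLp.equiv 2 (Fin d → ℝ) x))

/-- Embedding of an integer vector in `ℝ^d`. -/
def intVec {d : ℕ} (n : Fin d → ℤ) : EuclideanSpace ℝ (Fin d) :=
  (WithLp.equiv 2 (Fin d → ℝ)).symm fun i => (n i : ℝ)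

/-- The character `exp(2πi n·t)`. -/
def eChar {d : ℕ} (n : Fin d → ℤ) (t : EuclideanSpace ℝ (Fin d)) : ℂ :=
  Complex.exp (2 * Real.pi * Complex.I * ((∑ i, (n i : ℝ) * t i : ℝ) : ℂ))

/-- Discrepancy `D_{RΩ}(σ,t) = R^d|Ω| − card(ℤ^d ∩ (Rσ(Ω)+t))`. -/
def disc {d : ℕ} (Ω : Set (EuclideanSpace ℝ (Fin d))) (R : ℝ) (σ : SOd d)
    (t : EuclideanSpace ℝ (Fin d)) : ℝ :=
  R ^ d * (volume Ω).toReal - latticeCount ((fun x => R • rotBy σ x + t) '' Ω)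


open RealInnerProductSpace in
lemma ftChi_continuous {d : ℕ} (Ω : Set (EuclideanSpace ℝ (Fin d))) (h : volume Ω ≠ ⊤) :
    Continuous (ftChi Ω) := by
  haveI : IsFiniteMeasure (volume.restrict Ω) :=
    ⟨by rw [Measure.restrict_apply_univ]; exact h.lt_top⟩
  apply MeasureTheory.continuous_of_dominated (bound := fun _ => 1)
  · intro ξ
    exact (Complex.continuous_exp.comp
      (continuous_const.mul (Complex.continuous_ofReal.comp
        (continuous_const.inner continuous_id)))).aestronglyMeasurable
  · intro ξ
    filter_upwards with x
    simp [Complex.norm_exp]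
  · exact integrable_const 1
  · filter_upwards with x
    exact Complex.continuous_exp.comp
      (continuous_const.mul (Complex.continuous_ofReal.comp
        (continuous_id.inner continuous_const)))

lemma ftChi_norm_le {d : ℕ} (Ω : Set (EuclideanSpace ℝ (Fin d))) (h : volume Ω ≠ ⊤)
    (ξ : EuclideanSpace ℝ (Fin d)) : ‖ftChi Ω ξ‖ ≤ (volume Ω).toReal := by
  haveI : IsFiniteMeasure (volume.restrict Ω) :=
    ⟨by rw [Measure.restrict_apply_univ]; exact h.lt_top⟩
  have := MeasureTheory.norm_integral_le_of_norm_le_const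
    (μ := volume.restrict Ω) (C := 1)
    (f := fun x => Complex.exp (-(2 * Real.pi * Complex.I) * ((inner ℝ ξ x : ℝ) : ℂ)))
    (by filter_upwards with x; simp [Complex.norm_exp])
  simpa [ftChi, Measure.restrict_apply_univ, measureReal_def] using this

lemma rotBy_continuous {d : ℕ} (e : EuclideanSpace ℝ (Fin d)) :
    Continuous (fun σ : SOd d => rotBy σ e) := by
  unfold rotBy
  exact (PiLp.continuous_toLp 2 _).comp
    (continuous_subtype_val.matrix_mulVec continuous_const)

open RealInnerProductSpace in
/-- lower bound `c ρ^{−(d+1)/2}` for the rotational `L¹` average of the Fourier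
transform, via the stationary-phase asymptotics and the curvature separation
`K(σ₂) > κ`, `K(σ₁) < κ/2` on a set of rotations of positive measure. -/
theorem rotational_L1_fourier_lower_bound
    (d : ℕ) (hd : 2 ≤ d) (γ : ℝ) (hγ : 2 ≤ γ)
    (Ω : Set (EuclideanSpace ℝ (Fin d)))
    (hconv : Convex ℝ Ω) (hcomp : IsCompact Ω) (hint : (interior Ω).Nonempty)
    (μ : Measure (SOd d)) [IsProbabilityMeasure μ]
    (hμinv : ∀ τ : SOd d, Measure.map (fun σ => τ * σ) μ = μ)
    (e : EuclideanSpace ℝ (Fin d)) (he : ‖e‖ = 1)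
    (A : Set (SOd d)) (hAm : MeasurableSet A) (hA : 0 < μ A)
    (s₁ s₂ : SOd d → EuclideanSpace ℝ (Fin d)) (k₁ k₂ : SOd d → ℝ)
    (κ : ℝ) (hκ : 0 < κ)
    (hk : ∀ σ ∈ A, 0 < k₁ σ ∧ k₁ σ < κ / 2 ∧ κ < k₂ σ)
    (Cerr ρ₁ : ℝ) (hρ₁ : 1 ≤ ρ₁)
    (hasymp : ∀ σ ∈ A, ∀ ρ : ℝ, ρ₁ ≤ ρ →
      ‖ftChi Ω (ρ • rotBy σ e) -
        (2 * (Real.pi : ℂ) * Complex.I)⁻¹ * ((ρ ^ (-((d : ℝ) + 1) / 2) : ℝ) : ℂ) *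
          (((k₁ σ ^ (-(1 : ℝ) / 2) : ℝ) : ℂ) *
              Complex.exp (-(2 * (Real.pi : ℂ) * Complex.I) *
                  ((ρ * ⟪rotBy σ e, s₁ σ⟫ : ℝ) : ℂ) -
                (Real.pi : ℂ) * Complex.I * ((d : ℂ) - 1) / 4) -
            ((k₂ σ ^ (-(1 : ℝ) / 2) : ℝ) : ℂ) *
              Complex.exp (-(2 * (Real.pi : ℂ) * Complex.I) *
                  ((ρ * ⟪rotBy σ e, s₂ σ⟫ : ℝ) : ℂ) +
                (Real.pi : ℂ) * Complex.I * ((d : ℂ) - 1) / 4))‖ ≤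
        Cerr * ρ ^ (-((d : ℝ) + 3) / 2)) :
    ∃ c > (0 : ℝ), ∃ ρ₀ : ℝ, ∀ ρ : ℝ, ρ₀ ≤ ρ →
      c * ρ ^ (-((d : ℝ) + 1) / 2) ≤ ∫ σ, ‖ftChi Ω (ρ • rotBy σ e)‖ ∂μ := by
  haveI : BorelSpace (SOd d) := ⟨rfl⟩
  have hvol : volume Ω ≠ ⊤ := hcomp.measure_lt_top.ne
  have hcont : Continuous (ftChi Ω) := ftChi_continuous Ω hvol
  have hrot : Continuous (fun σ : SOd d => rotBy σ e) := rotBy_continuous e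
  set δ : ℝ := (κ/2) ^ (-(1:ℝ)/2) - κ ^ (-(1:ℝ)/2) with hδdef
  have hδ : 0 < δ := by
    have := Real.rpow_lt_rpow_of_neg (x := κ/2) (y := κ) (by positivity) (by linarith)
      (by norm_num : (-(1:ℝ)/2) < 0)
    simpa [hδdef, sub_pos] using this
  have hπ : (0:ℝ) < Real.pi := Real.pi_pos
  set B : ℝ := 4 * Real.pi * (|Cerr| + 1) / δ with hBdef
  have hB : 0 < B := by positivity
  refine ⟨(μ A).toReal * (δ / (4 * Real.pi)), ?_, max ρ₁ B, ?_⟩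
  · have : 0 < (μ A).toReal := ENNReal.toReal_pos hA.ne' (measure_ne_top μ A)
    positivity
  intro ρ hρ
  have hρ1 : ρ₁ ≤ ρ := le_trans (le_max_left _ _) hρ
  have hρB : B ≤ ρ := le_trans (le_max_right _ _) hρ
  have hρpos : 0 < ρ := lt_of_lt_of_le (by linarith) hρ1
  set r : ℝ := ρ ^ (-((d : ℝ) + 1) / 2) with hrdef
  have hrpos : 0 < r := Real.rpow_pos_of_pos hρpos _
  set L : ℝ := (δ / (4 * Real.pi)) * r with hLdef
  have herr : Cerr * ρ ^ (-((d : ℝ) + 3) / 2) ≤ (δ / (4 * Real.pi)) * r := by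
    have hsplit : ρ ^ (-((d : ℝ) + 3) / 2) = r * ρ⁻¹ := by
      rw [hrdef, ← Real.rpow_neg_one ρ, ← Real.rpow_add hρpos]
      ring_nf
    have hinv : ρ⁻¹ ≤ B⁻¹ := inv_anti₀ hB hρB
    have hBinv : (|Cerr| + 1) * B⁻¹ = δ / (4 * Real.pi) := by
      rw [hBdef]
      field_simp
    calc Cerr * ρ ^ (-((d : ℝ) + 3) / 2) = (Cerr * ρ⁻¹) * r := by rw [hsplit]; ring
      _ ≤ ((|Cerr| + 1) * B⁻¹) * r := by
          apply mul_le_mul_of_nonneg_right _ hrpos.le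
          calc Cerr * ρ⁻¹ ≤ |Cerr| * ρ⁻¹ :=
                mul_le_mul_of_nonneg_right (le_abs_self Cerr) (by positivity)
            _ ≤ (|Cerr| + 1) * B⁻¹ :=
                mul_le_mul (by linarith) hinv (by positivity) (by positivity)
      _ = (δ / (4 * Real.pi)) * r := by rw [hBinv]
  have key : ∀ σ ∈ A, L ≤ ‖ftChi Ω (ρ • rotBy σ e)‖ := by
    intro σ hσ
    obtain ⟨h1, h2, h3⟩ := hk σ hσ
    have hasy := hasymp σ hσ ρ hρ1
    set a : ℝ := k₁ σ ^ (-(1:ℝ)/2) with hadef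
    set b : ℝ := k₂ σ ^ (-(1:ℝ)/2) with hbdef
    have ha : 0 < a := Real.rpow_pos_of_pos h1 _
    have hb : 0 < b := Real.rpow_pos_of_pos (lt_trans hκ h3) _
    have hab : δ ≤ a - b := by
      have h4 : (κ/2) ^ (-(1:ℝ)/2) < a :=
        Real.rpow_lt_rpow_of_neg h1 h2 (by norm_num)
      have h5 : b < κ ^ (-(1:ℝ)/2) :=
        Real.rpow_lt_rpow_of_neg hκ h3 (by norm_num)
      rw [hδdef]; linarith
    set E₁ : ℂ := Complex.exp (-(2 * (Real.pi : ℂ) * Complex.I) *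
        ((ρ * inner ℝ (rotBy σ e) (s₁ σ) : ℝ) : ℂ) -
      (Real.pi : ℂ) * Complex.I * ((d : ℂ) - 1) / 4) with hE1def
    set E₂ : ℂ := Complex.exp (-(2 * (Real.pi : ℂ) * Complex.I) *
        ((ρ * inner ℝ (rotBy σ e) (s₂ σ) : ℝ) : ℂ) +
      (Real.pi : ℂ) * Complex.I * ((d : ℂ) - 1) / 4) with hE2def
    have hE1 : ‖E₁‖ = 1 := by simp [hE1def, Complex.norm_exp]
    have hE2 : ‖E₂‖ = 1 := by simp [hE2def, Complex.norm_exp]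
    set M : ℂ := (2 * (Real.pi : ℂ) * Complex.I)⁻¹ * ((r : ℝ) : ℂ) *
      (((a : ℝ) : ℂ) * E₁ - ((b : ℝ) : ℂ) * E₂) with hMdef
    have hX : a - b ≤ ‖((a : ℝ) : ℂ) * E₁ - ((b : ℝ) : ℂ) * E₂‖ := by
      have := norm_sub_norm_le (((a : ℝ) : ℂ) * E₁) (((b : ℝ) : ℂ) * E₂)
      rw [norm_mul, norm_mul, hE1, hE2, Complex.norm_real, Complex.norm_real,
        Real.norm_eq_abs, Real.norm_eq_abs, abs_of_pos ha, abs_of_pos hb] at this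
      simpa using this
    have hMnorm : (2 * Real.pi)⁻¹ * r * (a - b) ≤ ‖M‖ := by
      rw [hMdef, norm_mul, norm_mul]
      have h6 : ‖(2 * (Real.pi : ℂ) * Complex.I)⁻¹‖ = (2 * Real.pi)⁻¹ := by
        simp [abs_of_pos Real.pi_pos]
      have h7 : ‖((r : ℝ) : ℂ)‖ = r := by
        rw [Complex.norm_real, Real.norm_eq_abs, abs_of_pos hrpos]
      rw [h6, h7]
      exact mul_le_mul_of_nonneg_left hX (by positivity)
    have htri : ‖M‖ - ‖ftChi Ω (ρ • rotBy σ e) - M‖ ≤ ‖ftChi Ω (ρ • rotBy σ e)‖ := by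
      have := norm_sub_norm_le M (ftChi Ω (ρ • rotBy σ e))
      rw [norm_sub_rev] at this
      linarith
    have hfinal : (2 * Real.pi)⁻¹ * r * δ - (δ / (4 * Real.pi)) * r ≤
        ‖ftChi Ω (ρ • rotBy σ e)‖ := by
      have hd1 : (2 * Real.pi)⁻¹ * r * δ ≤ (2 * Real.pi)⁻¹ * r * (a - b) :=
        mul_le_mul_of_nonneg_left hab (by positivity)
      have herr2 : ‖ftChi Ω (ρ • rotBy σ e) - M‖ ≤ (δ / (4 * Real.pi)) * r := by
        calc ‖ftChi Ω (ρ • rotBy σ e) - M‖ ≤ Cerr * ρ ^ (-((d : ℝ) + 3) / 2) := hasy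
          _ ≤ (δ / (4 * Real.pi)) * r := herr
      linarith
    have hcoeff : (2 * Real.pi)⁻¹ * r * δ - (δ / (4 * Real.pi)) * r =
        (δ / (4 * Real.pi)) * r := by
      field_simp
      ring
    rw [hLdef]
    linarith [hcoeff ▸ hfinal]
  have hmeas : Continuous (fun σ : SOd d => ‖ftChi Ω (ρ • rotBy σ e)‖) :=
    (hcont.comp (hrot.const_smul ρ)).norm
  have hint1 : Integrable (fun σ : SOd d => ‖ftChi Ω (ρ • rotBy σ e)‖) μ := by
    refine Integrable.mono' (integrable_const ((volume Ω).toReal))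
      hmeas.aestronglyMeasurable ?_
    filter_upwards with σ
    rw [Real.norm_eq_abs, abs_of_nonneg (norm_nonneg _)]
    exact ftChi_norm_le Ω hvol _
  have hmono : ∫ σ, A.indicator (fun _ => L) σ ∂μ ≤
      ∫ σ, ‖ftChi Ω (ρ • rotBy σ e)‖ ∂μ := by
    apply integral_mono_of_nonneg _ hint1
    · filter_upwards with σ
      by_cases hσ : σ ∈ A
      · simpa [Set.indicator_of_mem hσ] using key σ hσ
      · simp [Set.indicator_of_notMem hσ]
    · filter_upwards with σ
      exact Set.indicator_nonneg (fun _ _ => by positivity) σ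
  rw [integral_indicator_const L hAm, smul_eq_mul] at hmono
  calc (μ A).toReal * (δ / (4 * Real.pi)) * ρ ^ (-((d : ℝ) + 1) / 2)
      = (μ A).toReal * L := by rw [hLdef, hrdef]; ring
    _ ≤ _ := hmono
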